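/- Let A be a C*-algebra, X a (right) Hilbert A-module and φ : A → B(X) a left action. If there exists a closed two-sided ideal J of A such that the restriction of φ to J is a bijection from J onto K(X), then J = J_X = φ⁻¹(K(X)) ∩ (ker φ)^⊥. -/

import Mathlib

open scoped RightActions

open scoped ContinuousMapZero Topology

/-- The Hilbert C⋆-module class as it stood in Mathlib of December 2024 (right `A`-module
structure via `SMul Aᵐᵒᵖ E`); Mathlib's `CStarModule` now uses a left action `SMul A E`. -/
class CStarModuleRight (A E : Type*) [NonUnitalSemiring A] [StarRing A] [Module ℂ A]
    [AddCommGroup E] [Module ℂ E] [PartialOrder A] [SMul Aᵐᵒᵖ E] [Norm A] [Norm E]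
    extends Inner A E where
  inner_add_right {x} {y} {z} : inner x (y + z) = inner x y + inner x z
  inner_self_nonneg {x} : 0 ≤ inner x x
  inner_self {x} : inner x x = 0 ↔ x = 0
  inner_op_smul_right {a : A} {x y : E} : inner x (y <• a) = inner x y * a
  inner_smul_right_complex {z : ℂ} {x} {y} : inner x (z • y) = z • inner x y
  star_inner x y : star (inner x y) = inner y x
  norm_eq_sqrt_norm_inner_self x : ‖x‖ = √‖inner x x‖

section Aux
variable {A : Type*} [NonUnitalCStarAlgebra A] [PartialOrder A] [StarOrderedRing A]

/-- Closed two-sided ideals in a C*-algebra are closed under real scalar multiplication. -/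
lemma TwoSidedIdeal.smul_mem_of_isClosed (J : TwoSidedIdeal A) (hJ : IsClosed (J : Set A))
    (r : ℝ) {x : A} (hx : x ∈ J) : r • x ∈ J := by
  have hau := CStarAlgebra.increasingApproximateUnit A
  have h1 : Filter.Tendsto (fun e : A => x * (r • e)) (CStarAlgebra.approximateUnit A)
      (𝓝 (r • x)) := by
    have := (hau.tendsto_mul_left x).const_smul r
    simpa [mul_smul_comm] using this
  have := hau.toIsApproximateUnit.neBot
  have hmem : ∀ e : A, x * (r • e) ∈ (J : Set A) := fun e => J.mul_mem_right _ _ hx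
  have : r • x ∈ closure (J : Set A) :=
    mem_closure_of_tendsto h1 (Filter.Eventually.of_forall hmem)
  rwa [hJ.closure_eq] at this

/-- If `a * (star a * a) ∈ J` for a closed two-sided ideal `J`, then `a ∈ J`. -/
lemma mem_of_mul_star_mul_self_mem (J : TwoSidedIdeal A) (hJ : IsClosed (J : Set A))
    {a : A} (h : a * (star a * a) ∈ J) : a ∈ J := by
  set s : A := star a * a with hs_def
  have hs : IsSelfAdjoint s := IsSelfAdjoint.star_mul_self a
  have hs0 : (0 : A) ≤ s := star_mul_self_nonneg a
  -- `a * cfcₙHom hs f ∈ J` for every `f`.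
  have key : ∀ f : C(quasispectrum ℝ s, ℝ)₀, a * cfcₙHom hs f ∈ J := by
    have h0 : ((0 : quasispectrum ℝ s) : ℝ) = 0 := quasispectrum.coe_zero s
    have hid : cfcₙHom hs (ContinuousMapZero.id (quasispectrum ℝ s)) = s := cfcₙHom_id hs
    intro f
    induction f using ContinuousMapZero.induction_on_of_compact with
    | zero => simpa using J.zero_mem
    | id => rw [hid]; exact h
    | star_id =>
        rw [show star (ContinuousMapZero.id (quasispectrum ℝ s)) =
          ContinuousMapZero.id (quasispectrum ℝ s) from by
            ext z; simp, hid]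
        exact h
    | add f g hf hg => rw [map_add, mul_add]; exact J.add_mem hf hg
    | mul f g hf hg => rw [map_mul, ← mul_assoc]; exact J.mul_mem_right _ _ hf
    | smul r f hf =>
        rw [map_smul, mul_smul_comm]
        exact J.smul_mem_of_isClosed hJ r hf
    | frequently f hf =>
        have hcont : Continuous fun g : C(quasispectrum ℝ s, ℝ)₀ => a * cfcₙHom hs g :=
          (continuous_mul_left a).comp (cfcₙHom_isClosedEmbedding hs).continuous
        have hclosed : IsClosed {g : C(quasispectrum ℝ s, ℝ)₀ | a * cfcₙHom hs g ∈ J} :=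
          hJ.preimage hcont
        exact hclosed.closure_subset (mem_closure_iff_frequently.mpr hf)
  have key' : ∀ f : ℝ → ℝ, Continuous f → f 0 = 0 → a * cfcₙ f s ∈ J := by
    intro f hf hf0
    rw [cfcₙ_apply f s hf.continuousOn hf0 hs]
    exact key _
  -- approximation: for every `δ > 0` we find an element of `J` within `√δ` of `a`.
  have happrox : ∀ δ : ℝ, 0 < δ → ∃ b ∈ (J : Set A), ‖a - b‖ ≤ Real.sqrt δ := by
    intro δ hδ
    set f : ℝ → ℝ := fun t => min (t * δ⁻¹) 1 with hf_def
    have hfc : Continuous f := (continuous_id.mul continuous_const).min continuous_const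
    have hf0 : f 0 = 0 := by simp [hf_def]
    set u : A := cfcₙ f s with hu_def
    have hu : IsSelfAdjoint u := cfcₙ_predicate f s
    refine ⟨a * u, key' f hfc hf0, ?_⟩
    have hidc : ContinuousOn (fun t : ℝ => t) (quasispectrum ℝ s) := continuous_id.continuousOn
    have htf : ContinuousOn (fun t : ℝ => t * f t) (quasispectrum ℝ s) :=
      hidc.mul hfc.continuousOn
    have h1 : cfcₙ (fun t : ℝ => t * f t) s = s * u := by
      rw [show s * u = cfcₙ (fun t : ℝ => t) s * cfcₙ f s from by rw [cfcₙ_id' ℝ s]]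
      exact cfcₙ_mul _ _ s hidc rfl hfc.continuousOn hf0
    have h2 : cfcₙ (fun t : ℝ => f t * t) s = u * s := by
      rw [show u * s = cfcₙ f s * cfcₙ (fun t : ℝ => t) s from by rw [cfcₙ_id' ℝ s]]
      exact cfcₙ_mul _ _ s hfc.continuousOn hf0 hidc rfl
    have h3 : cfcₙ (fun t : ℝ => f t * (t * f t)) s = u * (s * u) := by
      rw [← h1]
      exact cfcₙ_mul _ _ s hfc.continuousOn hf0 htf (by simp)
    have hsub1 : cfcₙ (fun t : ℝ => t - t * f t) s = s - s * u := by
      rw [show s - s * u = cfcₙ (fun t : ℝ => t) s - cfcₙ (fun t : ℝ => t * f t) s from by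
        rw [cfcₙ_id' ℝ s, h1]]
      exact cfcₙ_sub _ _ s hidc rfl htf (by simp)
    have hsub2 : cfcₙ (fun t : ℝ => f t * t - f t * (t * f t)) s = u * s - u * (s * u) := by
      rw [show u * s - u * (s * u)
          = cfcₙ (fun t : ℝ => f t * t) s - cfcₙ (fun t : ℝ => f t * (t * f t)) s from by
        rw [h2, h3]]
      exact cfcₙ_sub _ _ s (hfc.continuousOn.mul hidc) (by simp)
        (hfc.continuousOn.mul htf) (by simp)
    have hexp : cfcₙ (fun t : ℝ => (t - t * f t) - (f t * t - f t * (t * f t))) s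
        = star (a - a * u) * (a - a * u) := by
      rw [show star (a - a * u) * (a - a * u) = (s - s * u) - (u * s - u * (s * u)) from by
        rw [star_sub, star_mul, hu.star_eq, hs_def]; noncomm_ring, ← hsub1, ← hsub2]
      exact cfcₙ_sub _ _ s (hidc.sub htf) (by simp)
        ((hfc.continuousOn.mul hidc).sub (hfc.continuousOn.mul htf)) (by simp)
    have hbound : ‖star (a - a * u) * (a - a * u)‖ ≤ δ := by
      rw [← hexp]
      refine norm_cfcₙ_le fun x hx => ?_
      have hx0 : (0 : ℝ) ≤ x := quasispectrum_nonneg_of_nonneg s hs0 x hx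
      have heq : (x - x * f x) - (f x * x - f x * (x * f x)) = x * (1 - f x) ^ 2 := by ring
      rw [heq, Real.norm_eq_abs]
      rcases le_or_gt δ x with hcase | hcase
      · have h1x : (1 : ℝ) ≤ x * δ⁻¹ := by
          rw [← div_eq_mul_inv]; exact (one_le_div hδ).mpr hcase
        have hfx : f x = 1 := min_eq_right h1x
        simp [hfx, hδ.le]
      · have hfx0 : 0 ≤ f x := le_min (by positivity) zero_le_one
        have hfx1 : f x ≤ 1 := min_le_right _ _
        have hsq : (1 - f x) ^ 2 ≤ 1 := by nlinarith
        rw [abs_of_nonneg (by positivity)]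
        nlinarith [mul_le_mul_of_nonneg_left hsq hx0]
    rw [← Real.sqrt_sq (norm_nonneg (a - a * u))]
    refine Real.sqrt_le_sqrt ?_
    rwa [sq, ← CStarRing.norm_star_mul_self]
  -- conclude by closedness
  have : a ∈ closure (J : Set A) := by
    refine Metric.mem_closure_iff.mpr fun ε hε => ?_
    obtain ⟨b, hbJ, hb⟩ := happrox ((ε / 2) ^ 2) (by positivity)
    refine ⟨b, hbJ, ?_⟩
    rw [dist_eq_norm]
    calc ‖a - b‖ ≤ Real.sqrt ((ε / 2) ^ 2) := hb
      _ = ε / 2 := Real.sqrt_sq (by positivity)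
      _ < ε := by linarith
  rwa [hJ.closure_eq] at this

end Aux


variable {A X : Type*} [NonUnitalCStarAlgebra A] [PartialOrder A] [StarOrderedRing A]
  [NormedAddCommGroup X] [NormedSpace ℂ X] [SMul Aᵐᵒᵖ X] [CStarModuleRight A X] [CompleteSpace X]

/-- `K(X)`: the closed linear span in `B(X)` of the rank-one operators
`θ_{ξ,η} : ζ ↦ ξ • ⟪η, ζ⟫`. -/
def compactOps (A X : Type*) [NonUnitalCStarAlgebra A] [PartialOrder A] [StarOrderedRing A]
    [NormedAddCommGroup X] [NormedSpace ℂ X] [SMul Aᵐᵒᵖ X] [CStarModuleRight A X]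
    [CompleteSpace X] : Set (X →L[ℂ] X) :=
  closure (Submodule.span ℂ
    {T : X →L[ℂ] X | ∃ ξ η : X, ∀ ζ : X, T ζ = ξ <• (inner A η ζ : A)} : Set (X →L[ℂ] X))

/-- The ideal `J_X = φ⁻¹(K(X)) ∩ (ker φ)^⊥` of Katsura, as a subset of `A`. -/
def KatsuraIdeal (φ : A →ₙₐ[ℂ] (X →L[ℂ] X)) : Set A :=
  {a : A | φ a ∈ compactOps A X} ∩ {a : A | ∀ b : A, φ b = 0 → a * b = 0}

/-- If `J` is a closed two-sided ideal of `A` such that the left action `φ` restricts to a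
bijection from `J` onto `K(X)`, then `J = J_X = φ⁻¹(K(X)) ∩ (ker φ)^⊥`. -/
theorem eq_katsuraIdeal_of_bijOn (φ : A →ₙₐ[ℂ] (X →L[ℂ] X))
    (hmod : ∀ (a : A) (ξ : X) (b : A), φ a (ξ <• b) = (φ a ξ) <• b)
    (hadj : ∀ (a : A) (ξ η : X), (inner A (φ a ξ) η : A) = inner A ξ (φ (star a) η))
    (J : TwoSidedIdeal A) (hJ : IsClosed (J : Set A))
    (hbij : Set.BijOn φ (J : Set A) (compactOps A X)) :
    (J : Set A) = KatsuraIdeal φ := by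
  apply Set.eq_of_subset_of_subset
  · intro a ha
    refine ⟨hbij.mapsTo ha, fun b hb => ?_⟩
    have hab : a * b ∈ (J : Set A) := J.mul_mem_right a b ha
    have h0 : (0 : A) ∈ (J : Set A) := J.zero_mem
    exact hbij.injOn hab h0 (by rw [map_mul, hb, mul_zero, map_zero])
  · rintro a ⟨h1, h2⟩
    obtain ⟨c, hcJ, hc⟩ := hbij.surjOn h1
    have hker : φ (star a * (a - c)) = 0 := by
      rw [map_mul, map_sub, hc, sub_self, mul_zero]
    have h0 : a * (star a * (a - c)) = 0 := h2 _ hker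
    have heq : a * (star a * a) - a * (star a * c) = 0 := by
      rw [← mul_sub, ← mul_sub]; exact h0
    rw [sub_eq_zero] at heq
    have hmem : a * (star a * a) ∈ J := by
      rw [heq]
      exact J.mul_mem_left _ _ (J.mul_mem_left _ _ hcJ)
    exact mem_of_mul_star_mul_self_mem J hJ hmem
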